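/- Let (X,d) be a metric space, T : X → X a generalized Kannan type mapping with constant λ ∈ [0, 2/3), and let x be an accumulation point of X at which T is continuous. Then d(Tx,Ty) ≤ λ(d(x,Tx) + d(y,Ty)/2) for all y ∈ X. -/
import Mathlib


theorem stmt_1 {X : Type*} [MetricSpace X] (T : X → X)
    (l : ℝ) (hl0 : 0 ≤ l) (hl : l < 2/3)
    (hGK : ∀ x y z : X, x ≠ y → y ≠ z → x ≠ z →
      dist (T x) (T y) + dist (T y) (T z) + dist (T x) (T z) ≤
        l * (dist x (T x) + dist y (T y) + dist z (T z)))
    (x : X) (hacc : (nhdsWithin x {x}ᶜ).NeBot) (hcont : ContinuousAt T x) :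
    ∀ y : X, dist (T x) (T y) ≤ l * (dist x (T x) + dist y (T y) / 2) := by
  intro y
  by_cases hxy : x = y
  · subst hxy
    simp only [dist_self]
    positivity
  · set F := nhdsWithin x {x}ᶜ
    have hTz : Filter.Tendsto T F (nhds (T x)) :=
      hcont.continuousWithinAt.tendsto
    have hid : Filter.Tendsto (fun z : X => z) F (nhds x) :=
      tendsto_nhdsWithin_of_tendsto_nhds Filter.tendsto_id
    have hf : Filter.Tendsto
        (fun z => dist (T x) (T y) + dist (T y) (T z) + dist (T x) (T z)) F
        (nhds (dist (T x) (T y) + dist (T y) (T x) + dist (T x) (T x))) := by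
      exact ((tendsto_const_nhds.add ((tendsto_const_nhds.dist hTz))).add
        (tendsto_const_nhds.dist hTz))
    have hg : Filter.Tendsto
        (fun z => l * (dist x (T x) + dist y (T y) + dist z (T z))) F
        (nhds (l * (dist x (T x) + dist y (T y) + dist x (T x)))) := by
      exact tendsto_const_nhds.mul
        (tendsto_const_nhds.add (hid.dist hTz))
    have hev : ∀ᶠ z in F,
        dist (T x) (T y) + dist (T y) (T z) + dist (T x) (T z) ≤
          l * (dist x (T x) + dist y (T y) + dist z (T z)) := by
      have h1 : ∀ᶠ z in F, z ≠ x := eventually_mem_nhdsWithin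
      have h2 : ∀ᶠ z in F, z ≠ y := by
        have : ∀ᶠ z in nhds x, z ≠ y := by
          have : {y}ᶜ ∈ nhds x := isOpen_compl_singleton.mem_nhds (by simpa using hxy)
          filter_upwards [this] with z hz using hz
        exact nhdsWithin_le_nhds this
      filter_upwards [h1, h2] with z hzx hzy
      exact hGK x y z hxy (fun h => hzy h.symm) (fun h => hzx h.symm)
    have hle := le_of_tendsto_of_tendsto hf hg hev
    have h1 : dist (T y) (T x) = dist (T x) (T y) := dist_comm _ _
    simp only [dist_self, h1] at hle
    linarith
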